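/- Let k and n ≥ 2 be positive integers and a_1,...,a_n nonzero integers. Then there exist integers λ_1,...,λ_n with a_1λ_1+...+a_nλ_n = 0, each λ_1,...,λ_{n-1} chosen from {a_n, 2a_n, ..., (k+1)a_n}, and |λ_n| ≤ (k+1)(|a_1|+...+|a_{n-1}|), such that for any k given affine conditions A_{j,1}λ_1+...+A_{j,n}λ_n = b_j (1 ≤ j ≤ k) with no (A_{j,1},...,A_{j,n}) a rational multiple of (a_1,...,a_n), all k conditions fail. -/

import Mathlib

lemma avoid_lemma (m k : ℕ) (hm : 1 ≤ m) (c : Fin k → Fin m → ℚ) (d : Fin k → ℚ)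
    (hc : ∀ j, ∃ i, c j i ≠ 0) :
    ∃ t : Fin m → ℕ, (∀ i, 1 ≤ t i ∧ t i ≤ k + 1) ∧
      ∀ j, ∑ i, c j i * (t i : ℚ) ≠ d j := by
  classical
  set G : Finset (Fin m → ℕ) := Fintype.piFinset (fun _ => Finset.Icc 1 (k+1)) with hG
  have hGcard : G.card = (k+1)^m := by
    simp [hG, Fintype.card_piFinset, Nat.card_Icc]
  have hbad : ∀ j, (G.filter (fun t => ∑ i, c j i * (t i : ℚ) = d j)).card ≤ (k+1)^(m-1) := by
    intro j
    obtain ⟨i0, hi0⟩ := hc j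
    set G' : Finset (Fin m → ℕ) :=
      Fintype.piFinset (Function.update (fun _ => Finset.Icc 1 (k+1)) i0 {1}) with hG'
    have hG'card : G'.card = (k+1)^(m-1) := by
      have hcards : ∀ i, (Function.update (fun _ => Finset.Icc 1 (k+1)) i0
          ({1} : Finset ℕ) i).card = if i = i0 then 1 else k+1 := by
        intro i
        rcases eq_or_ne i i0 with h | h
        · subst h; rw [Function.update_self]; simp
        · rw [Function.update_of_ne h, if_neg h]; simp [Nat.card_Icc]
      rw [hG', Fintype.card_piFinset]
      rw [Finset.prod_congr rfl (fun i _ => hcards i)]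
      rw [← Finset.prod_erase_mul _ _ (Finset.mem_univ i0), if_pos rfl, mul_one]
      rw [Finset.prod_congr rfl (fun i hi => if_neg (Finset.ne_of_mem_erase hi))]
      simp [Finset.card_erase_of_mem, Finset.card_univ]
    calc (G.filter (fun t => ∑ i, c j i * (t i : ℚ) = d j)).card ≤ G'.card := by
          apply Finset.card_le_card_of_injOn (fun t => Function.update t i0 1)
          · intro t ht
            rw [Finset.mem_coe, Finset.mem_filter] at ht
            rw [Finset.mem_coe, hG', Fintype.mem_piFinset]
            intro i
            by_cases h : i = i0
            · subst h; simp
            · rw [Function.update_of_ne h]; beta_reduce; rw [Function.update_of_ne h]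
              exact (Fintype.mem_piFinset.mp ht.1) i
          · intro t ht t' ht' heq
            rw [Finset.coe_filter, Set.mem_setOf_eq] at ht ht'
            have hne : ∀ i, i ≠ i0 → t i = t' i := by
              intro i hi
              have h2 := congrFun heq i
              simpa [Function.update_of_ne hi] using h2
            have hsum : ∑ i, c j i * ((t i : ℚ) - (t' i : ℚ)) = 0 := by
              have : ∑ i, c j i * ((t i : ℚ) - (t' i : ℚ))
                  = (∑ i, c j i * (t i : ℚ)) - ∑ i, c j i * (t' i : ℚ) := by
                rw [← Finset.sum_sub_distrib]; ring_nf
              rw [this, ht.2, ht'.2, sub_self]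
            have h0 : c j i0 * ((t i0 : ℚ) - (t' i0 : ℚ)) = 0 := by
              rw [← hsum]
              symm
              apply Finset.sum_eq_single
              · intro i _ hi
                rw [hne i hi, sub_self, mul_zero]
              · intro h; exact absurd (Finset.mem_univ i0) h
            have : (t i0 : ℚ) = (t' i0 : ℚ) := by
              rcases mul_eq_zero.mp h0 with h | h
              · exact absurd h hi0
              · linarith [sub_eq_zero.mp h]
            have hti0 : t i0 = t' i0 := Nat.cast_injective this
            funext i
            by_cases h : i = i0
            · subst h; exact hti0
            · exact hne i h
      _ = (k+1)^(m-1) := hG'card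
  set Bad := G.filter (fun t => ∃ j, ∑ i, c j i * (t i : ℚ) = d j) with hBad
  have hsub : Bad ⊆ Finset.univ.biUnion
      (fun j => G.filter (fun t => ∑ i, c j i * (t i : ℚ) = d j)) := by
    intro t ht
    rw [hBad, Finset.mem_filter] at ht
    obtain ⟨hg, j, hj⟩ := ht
    exact Finset.mem_biUnion.mpr ⟨j, Finset.mem_univ j, Finset.mem_filter.mpr ⟨hg, hj⟩⟩
  have hcard : Bad.card < G.card := by
    calc Bad.card ≤ _ := Finset.card_le_card hsub
      _ ≤ ∑ j : Fin k, (G.filter (fun t => ∑ i, c j i * (t i : ℚ) = d j)).card :=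
          Finset.card_biUnion_le
      _ ≤ ∑ _j : Fin k, (k+1)^(m-1) := Finset.sum_le_sum (fun j _ => hbad j)
      _ = k * (k+1)^(m-1) := by simp [mul_comm]
      _ < (k+1)^m := by
          have : (k+1)^m = (k+1) * (k+1)^(m-1) := by
            conv_lhs => rw [show m = 1 + (m-1) by omega]
            rw [pow_add, pow_one]
          rw [this]
          have : 0 < (k+1)^(m-1) := Nat.pow_pos (by omega)
          nlinarith
      _ = G.card := hGcard.symm
  have hne : (G \ Bad).Nonempty := by
    have hBsub : Bad ⊆ G := by rw [hBad]; exact Finset.filter_subset _ _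
    rw [← Finset.card_pos, Finset.card_sdiff_of_subset hBsub]
    omega
  obtain ⟨t, ht⟩ := hne
  rw [Finset.mem_sdiff] at ht
  refine ⟨t, ?_, ?_⟩
  · intro i
    have := (Fintype.mem_piFinset.mp ht.1) i
    rw [Finset.mem_Icc] at this
    exact this
  · intro j hj
    exact ht.2 (Finset.mem_filter.mpr ⟨ht.1, ⟨j, hj⟩⟩)



/-- Quantitative bound from the proof of Theorem 2: a bounded perturbation vector
in the kernel avoiding the k given affine hyperplanes. -/
theorem stmt_12 (n k : ℕ) (hn : 2 ≤ n) (a : Fin n → ℤ) (ha : ∀ i, a i ≠ 0)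
    (A : Fin k → Fin n → ℤ)
    (hA : ∀ j, ¬ ∃ q : ℚ, ∀ i, (A j i : ℚ) = q * (a i : ℚ))
    (b : Fin k → ℚ) :
    ∃ l : Fin n → ℤ,
      (∑ i, a i * l i = 0) ∧
      (∀ i : Fin n, (i : ℕ) < n - 1 → ∃ t : ℕ, 1 ≤ t ∧ t ≤ k + 1 ∧
        l i = (t : ℤ) * a ⟨n - 1, by omega⟩) ∧
      |l ⟨n - 1, by omega⟩| ≤ (k + 1) *
        ∑ i ∈ Finset.univ.filter (fun i : Fin n => (i : ℕ) < n - 1), |a i| ∧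
      ∀ j, ∑ i, (A j i : ℚ) * (l i : ℚ) ≠ b j := by
  obtain ⟨m, rfl⟩ : ∃ m, n = m + 1 := ⟨n - 1, by omega⟩
  have hm : 1 ≤ m := by omega
  have he : (⟨m + 1 - 1, by omega⟩ : Fin (m + 1)) = Fin.last m := rfl
  have haQ : (a (Fin.last m) : ℚ) ≠ 0 := Int.cast_ne_zero.mpr (ha _)
  -- coefficients of the affine functionals in the t-variables
  set c : Fin k → Fin m → ℚ := fun j i =>
    (A j i.castSucc : ℚ) * (a (Fin.last m) : ℚ) - (A j (Fin.last m) : ℚ) * (a i.castSucc : ℚ)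
    with hc_def
  have hc : ∀ j, ∃ i, c j i ≠ 0 := by
    intro j
    by_contra h
    push_neg at h
    apply hA j
    refine ⟨(A j (Fin.last m) : ℚ) / (a (Fin.last m) : ℚ), fun i => ?_⟩
    induction i using Fin.lastCases with
    | last => field_simp
    | cast i =>
        have h0 := h i
        rw [hc_def, sub_eq_zero] at h0
        field_simp
        linarith [h0]
  obtain ⟨t, htmem, htavoid⟩ := avoid_lemma m k hm c b hc
  set l : Fin (m + 1) → ℤ := fun i =>
    if h : (i : ℕ) < m then (t ⟨i, h⟩ : ℤ) * a (Fin.last m)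
    else -∑ i' : Fin m, a i'.castSucc * (t i' : ℤ) with hl_def
  have hl_cast : ∀ i : Fin m, l i.castSucc = (t i : ℤ) * a (Fin.last m) := by
    intro i
    have : ((i.castSucc : Fin (m+1)) : ℕ) < m := i.2
    rw [hl_def]
    simp only [dif_pos this]
    congr 1
  have hl_last : l (Fin.last m) = -∑ i' : Fin m, a i'.castSucc * (t i' : ℤ) := by
    rw [hl_def]
    simp
  have hfilt : Finset.univ.filter (fun i : Fin (m+1) => (i : ℕ) < m + 1 - 1)
      = Finset.univ.image Fin.castSucc := by
    ext i
    simp only [Finset.mem_filter, Finset.mem_univ, true_and, Finset.mem_image]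
    constructor
    · intro h
      exact ⟨⟨(i : ℕ), by omega⟩, Fin.ext rfl⟩
    · rintro ⟨j, rfl⟩
      simp
  refine ⟨l, ?_, ?_, ?_, ?_⟩
  · -- kernel condition
    rw [Fin.sum_univ_castSucc]
    simp only [hl_last]
    rw [Finset.sum_congr rfl (fun i _ => by rw [hl_cast i])]
    rw [show (∑ i : Fin m, a i.castSucc * ((t i : ℤ) * a (Fin.last m)))
        = a (Fin.last m) * ∑ i' : Fin m, a i'.castSucc * (t i' : ℤ) from by
      rw [Finset.mul_sum]; exact Finset.sum_congr rfl fun i _ => by ring]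
    ring
  · -- the t-values
    intro i hi
    have hi' : (i : ℕ) < m := by omega
    refine ⟨t ⟨i, hi'⟩, (htmem ⟨i, hi'⟩).1, (htmem ⟨i, hi'⟩).2, ?_⟩
    have hli : l i = (t ⟨i, hi'⟩ : ℤ) * a (Fin.last m) := by
      rw [hl_def]; simp only [dif_pos hi']
    rw [hli, he]
  · -- the bound
    rw [he, hl_last, hfilt, Finset.sum_image (fun x _ y _ h => Fin.castSucc_injective m h),
      abs_neg]
    calc |∑ i' : Fin m, a i'.castSucc * (t i' : ℤ)|
        ≤ ∑ i' : Fin m, |a i'.castSucc * (t i' : ℤ)| := Finset.abs_sum_le_sum_abs _ _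
      _ ≤ ∑ i' : Fin m, |a i'.castSucc| * (k + 1 : ℤ) := by
          apply Finset.sum_le_sum
          intro i _
          rw [abs_mul, Int.abs_natCast]
          have h1 := (htmem i).2
          have h2 : (0:ℤ) ≤ |a i.castSucc| := abs_nonneg _
          have : ((t i : ℤ)) ≤ (k + 1 : ℤ) := by exact_mod_cast h1
          nlinarith
      _ = (k + 1 : ℤ) * ∑ i' : Fin m, |a i'.castSucc| := by
          rw [← Finset.sum_mul, mul_comm]
      _ = ((k : ℤ) + 1) * ∑ i' : Fin m, |a i'.castSucc| := by ring
  · -- the hyperplanes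
    intro j
    have key : ∑ i, (A j i : ℚ) * (l i : ℚ) = ∑ i, c j i * (t i : ℚ) := by
      rw [Fin.sum_univ_castSucc, hl_last]
      rw [Finset.sum_congr rfl (fun i _ => by rw [hl_cast i])]
      push_cast
      rw [mul_neg, Finset.mul_sum, ← sub_eq_add_neg, ← Finset.sum_sub_distrib]
      apply Finset.sum_congr rfl
      intro i _
      rw [hc_def]
      ring
    rw [key]
    exact htavoid j
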